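/- In an affine commutative Poisson algebra over a field, every prime Poisson ideal is an intersection of Poisson primitive ideals (Poisson cores of maximal ideals). -/
import Mathlib

/-- In an affine commutative Poisson algebra over a field, every prime Poisson ideal is an
intersection of Poisson primitive ideals (Poisson cores of maximal ideals). -/
theorem prime_poisson_ideal_is_intersection_of_poisson_primitives
    (k : Type*) [Field k]
    (Z₀ : Type*) [CommRing Z₀] [Algebra k Z₀] [Algebra.FiniteType k Z₀]
    (bracket : Z₀ → Z₀ → Z₀)
    (hadd_l : ∀ a b c : Z₀, bracket (a + b) c = bracket a c + bracket b c)
    (hadd_r : ∀ a b c : Z₀, bracket a (b + c) = bracket a b + bracket a c)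
    (hsmul_l : ∀ (r : k) (a b : Z₀), bracket (r • a) b = r • bracket a b)
    (hsmul_r : ∀ (r : k) (a b : Z₀), bracket a (r • b) = r • bracket a b)
    (hleib_r : ∀ a b c : Z₀, bracket a (b * c) = bracket a b * c + b * bracket a c)
    (hanti : ∀ a b : Z₀, bracket a b = - bracket b a)
    (p : Ideal Z₀) (hp : p.IsPrime)
    (hppoisson : ∀ z : Z₀, ∀ a ∈ p, bracket z a ∈ p) :
    ∃ S : Set (Ideal Z₀),
      (∀ q ∈ S, ∃ m : Ideal Z₀, m.IsMaximal ∧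
        (∀ z : Z₀, ∀ a ∈ q, bracket z a ∈ q) ∧ q ≤ m ∧
        (∀ Q : Ideal Z₀, (∀ z : Z₀, ∀ a ∈ Q, bracket z a ∈ Q) → Q ≤ m → Q ≤ q)) ∧
      p = sInf S := by
  -- bracket z 0 = 0
  have hzero : ∀ z : Z₀, bracket z 0 = 0 := by
    intro z
    have := hadd_r z 0 0
    rw [add_zero] at this
    exact left_eq_add.mp this
  -- Poisson core of an ideal m
  set Pois : Ideal Z₀ → Prop := fun Q => ∀ z : Z₀, ∀ a ∈ Q, bracket z a ∈ Q with hPois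
  set core : Ideal Z₀ → Ideal Z₀ := fun m => sSup {Q : Ideal Z₀ | Pois Q ∧ Q ≤ m} with hcore
  have hdir : ∀ m : Ideal Z₀, DirectedOn (· ≤ ·) {Q : Ideal Z₀ | Pois Q ∧ Q ≤ m} := by
    intro m Q₁ h₁ Q₂ h₂
    refine ⟨Q₁ ⊔ Q₂, ⟨?_, sup_le h₁.2 h₂.2⟩, le_sup_left, le_sup_right⟩
    intro z a ha
    rw [Submodule.mem_sup] at ha ⊢
    obtain ⟨y, hy, z', hz', rfl⟩ := ha
    exact ⟨bracket z y, h₁.1 z y hy, bracket z z', h₂.1 z z' hz', (hadd_r z y z').symm⟩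
  have hne : ∀ m : Ideal Z₀, (⊥ : Ideal Z₀) ∈ {Q : Ideal Z₀ | Pois Q ∧ Q ≤ m} := by
    intro m
    refine ⟨?_, bot_le⟩
    intro z a ha
    rw [Ideal.mem_bot] at ha ⊢
    rw [ha, hzero]
  have hcore_pois : ∀ m : Ideal Z₀, Pois (core m) := by
    intro m z a ha
    rw [hcore] at ha ⊢
    rw [Submodule.mem_sSup_of_directed ⟨⊥, hne m⟩ (hdir m)] at ha
    obtain ⟨Q, hQ, haQ⟩ := ha
    exact (le_sSup hQ : Q ≤ _) (hQ.1 z a haQ)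
  have hcore_le : ∀ m : Ideal Z₀, core m ≤ m := fun m => sSup_le fun Q hQ => hQ.2
  have hcore_max : ∀ m Q : Ideal Z₀, Pois Q → Q ≤ m → Q ≤ core m :=
    fun m Q hQ hQm => le_sSup ⟨hQ, hQm⟩
  refine ⟨(fun m => core m) '' {m : Ideal Z₀ | p ≤ m ∧ m.IsMaximal}, ?_, ?_⟩
  · rintro q ⟨m, ⟨hpm, hm⟩, rfl⟩
    exact ⟨m, hm, hcore_pois m, hcore_le m, fun Q hQ hQm => hcore_max m Q hQ hQm⟩
  · have hjac : p.jacobson = p := isJacobsonRing_iff_prime_eq.mp (isJacobsonRing_of_finiteType (A := k)) p hp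
    refine le_antisymm (le_sInf ?_) ?_
    · rintro q ⟨m, ⟨hpm, hm⟩, rfl⟩
      exact hcore_max m p hppoisson hpm
    · intro x hx
      rw [← hjac, Ideal.jacobson, Ideal.mem_sInf]
      intro m hm
      have : x ∈ core m := (Ideal.mem_sInf.mp hx) ⟨m, ⟨hm.1, hm.2⟩, rfl⟩
      exact hcore_le m this
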